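/- (Sufficient condition for exact structure recovery.) Let T = (V, E) be a tree on p nodes, let X = (X_1, …, X_p) be a random vector whose distribution is Markov with respect to T, and for each pair i, j ∈ V let I(X_i; X_j) denote the mutual information and Î(X_i; X_j) any estimate of it. Suppose that for every pair ℓ, ℓ̄ ∈ V, |Î(X_ℓ; X_ℓ̄) − I(X_ℓ; X_ℓ̄)| < (1/2) · min over tuples ((w,w̄), u, ū) ∈ EV² of ( I(X_w; X_w̄) − I(X_u; X_ū) ). Then the maximum spanning tree computed from the edge weights { Î(X_i; X_j) : i, j ∈ V } equals T. -/

import Mathlib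

set_option linter.unusedSectionVars false

open scoped Classical

noncomputable section

namespace TreePaper

/-- `f` is a probability mass function. -/
def IsProbDist {α : Type*} (f : α → ℝ) : Prop :=
  (∀ a, 0 ≤ f a) ∧ ∑' a, f a = 1

/-- Shannon entropy (base 2) of a pmf, with the convention `0 · log 0 = 0`. -/
def ent {α : Type*} (f : α → ℝ) : ℝ := -∑' a, f a * Real.logb 2 (f a)

variable {V : Type*} [Fintype V] [DecidableEq V] {A : Type*}

/-- Marginal pmf of the coordinate `i`. -/
def marg1 (P : (V → A) → ℝ) (i : V) : A → ℝ :=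
  fun a => ∑' x : V → A, if x i = a then P x else 0

/-- Joint pmf of the pair of coordinates `(i, j)`. -/
def marg2 (P : (V → A) → ℝ) (i j : V) : A × A → ℝ :=
  fun ab => ∑' x : V → A, if x i = ab.1 ∧ x j = ab.2 then P x else 0

theorem marg2_symm (P : (V → A) → ℝ) (i j : V) (a b : A) :
    marg2 P i j (a, b) = marg2 P j i (b, a) :=
  tsum_congr fun _ => if_congr and_comm rfl rfl

/-- Mutual information (in bits) between the coordinates `i` and `j`,
`I(X_i; X_j) = H(X_i) + H(X_j) − H(X_i, X_j)`. -/
def mi (P : (V → A) → ℝ) (i j : V) : ℝ :=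
  ent (marg1 P i) + ent (marg1 P j) - ent (marg2 P i j)

/-- The factor attached to an edge in the tree factorization of a Markov random field. -/
def edgeFactor (P : (V → A) → ℝ) (x : V → A) : Sym2 V → ℝ :=
  Sym2.lift ⟨fun i j => marg2 P i j (x i, x j) / (marg1 P i (x i) * marg1 P j (x j)),
    fun i j => by
      dsimp only
      rw [marg2_symm P i j (x i) (x j), mul_comm (marg1 P i (x i)) (marg1 P j (x j))]⟩

/-- The distribution `P` is Markov with respect to (i.e. factorizes according to)
the tree `T`:  `p(x) = ∏_i p(x_i) ∏_{(i,j) ∈ E} p(x_i, x_j) / (p(x_i) p(x_j))`. -/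
def IsMarkovTree (T : SimpleGraph V) (P : (V → A) → ℝ) : Prop :=
  ∀ x : V → A,
    P x = (∏ i, marg1 P i (x i)) *
      ∏ e : Sym2 V, if e ∈ T.edgeSet then edgeFactor P x e else 1

/-- The tuple `(s(w, w̄), u, ū)` lies in the feasibility set `EV²`:  `s(w, w̄)` is an
edge of `T` lying on the unique path of `T` from `u` to `ū`, and this path has
at least two edges. -/
def EVtuple (T : SimpleGraph V) (w wb u ub : V) : Prop :=
  T.Adj w wb ∧ ∃ p : T.Walk u ub, p.IsPath ∧ s(w, wb) ∈ p.edges ∧ 2 ≤ p.length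

/-- The information threshold determined by the tree `T` and the
pairwise "mutual information" weights `I`:
`(1/2) · min_{(e,u,ū) ∈ EV²} ( I(w, w̄) − I(u, ū) )`. -/
def thresh (T : SimpleGraph V) (I : V → V → ℝ) : ℝ :=
  (1 / 2) * sInf {x : ℝ | ∃ w wb u ub : V, EVtuple T w wb u ub ∧ x = I w wb - I u ub}

/-- Total weight of the graph `G` under the edge weights `I`. -/
def score (I : V → V → ℝ) (G : SimpleGraph V) : ℝ :=
  ∑ i, ∑ j, if G.Adj i j then I i j else 0

/-- `G` is a maximum-weight spanning tree for the weights `I`. -/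
def IsMaxSpanTree (I : V → V → ℝ) (G : SimpleGraph V) : Prop :=
  G.IsTree ∧ ∀ G' : SimpleGraph V, G'.IsTree → score I G' ≤ score I G


/-! ### Auxiliary lemmas -/

lemma mi_symm (P : (V → A) → ℝ) (i j : V) : mi P i j = mi P j i := by
  have hent : ent (marg2 P i j) = ent (marg2 P j i) := by
    unfold ent
    congr 1
    calc ∑' ab : A × A, marg2 P i j ab * Real.logb 2 (marg2 P i j ab)
        = ∑' ab : A × A, marg2 P j i ((Equiv.prodComm A A) ab) *
            Real.logb 2 (marg2 P j i ((Equiv.prodComm A A) ab)) := by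
          refine tsum_congr fun ab => ?_
          rw [show marg2 P j i ((Equiv.prodComm A A) ab) = marg2 P i j ab by
            obtain ⟨a, b⟩ := ab; exact (marg2_symm P i j a b).symm]
      _ = ∑' ab : A × A, marg2 P j i ab * Real.logb 2 (marg2 P j i ab) :=
          (Equiv.prodComm A A).tsum_eq
            (fun ab => marg2 P j i ab * Real.logb 2 (marg2 P j i ab))
  unfold mi
  rw [hent]
  ring

lemma thresh_le (T : SimpleGraph V) (I : V → V → ℝ) {w wb u ub : V}
    (h : EVtuple T w wb u ub) : 2 * thresh T I ≤ I w wb - I u ub := by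
  set S := {x : ℝ | ∃ w wb u ub : V, EVtuple T w wb u ub ∧ x = I w wb - I u ub} with hS
  have hmem : I w wb - I u ub ∈ S := ⟨w, wb, u, ub, h, rfl⟩
  have hfin : S.Finite := by
    apply Set.Finite.subset (Set.finite_range
      (fun q : V × V × V × V => I q.1 q.2.1 - I q.2.2.1 q.2.2.2))
    rintro x ⟨w', wb', u', ub', _, rfl⟩
    exact ⟨(w', wb', u', ub'), rfl⟩
  have := csInf_le hfin.bddBelow hmem
  unfold thresh
  rw [← hS]
  linarith

lemma exists_crossing_edge (K T : SimpleGraph V) (u : V) :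
    ∀ {a b : V} (q : T.Walk a b), K.Reachable u a → ¬ K.Reachable u b →
      ∃ w wb, T.Adj w wb ∧ s(w, wb) ∈ q.edges ∧ K.Reachable u w ∧ ¬ K.Reachable u wb := by
  intro a b q
  induction q with
  | nil => exact fun ha hb => absurd ha hb
  | @cons a c b h q ih =>
    intro ha hb
    by_cases hc : K.Reachable u c
    · obtain ⟨w, wb, h1, h2, h3, h4⟩ := ih hc hb
      exact ⟨w, wb, h1, List.mem_cons_of_mem _ h2, h3, h4⟩
    · exact ⟨a, c, h, by simp, ha, hc⟩

lemma reach_or (G : SimpleGraph V) (u ub : V) :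
    ∀ {a b : V} (q : G.Walk a b),
      ((G \ SimpleGraph.fromEdgeSet {s(u, ub)}).Reachable u a ∨
        (G \ SimpleGraph.fromEdgeSet {s(u, ub)}).Reachable ub a) →
      ((G \ SimpleGraph.fromEdgeSet {s(u, ub)}).Reachable u b ∨
        (G \ SimpleGraph.fromEdgeSet {s(u, ub)}).Reachable ub b) := by
  intro a b q
  set K := G \ SimpleGraph.fromEdgeSet {s(u, ub)} with hK
  induction q with
  | nil => exact id
  | @cons a c b h q ih =>
    intro ha
    apply ih
    by_cases he : s(a, c) = s(u, ub)
    · rw [Sym2.eq_iff] at he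
      rcases he with ⟨rfl, rfl⟩ | ⟨rfl, rfl⟩
      · right; exact SimpleGraph.Reachable.refl _
      · left; exact SimpleGraph.Reachable.refl _
    · have hadj : K.Adj a c := by
        rw [hK]
        exact ⟨h, by simp [he]⟩
      rcases ha with ha | ha
      · exact Or.inl (ha.trans hadj.reachable)
      · exact Or.inr (ha.trans hadj.reachable)

lemma lift_reach (G2 G : SimpleGraph V) (u ub : V)
    (hsub : ∀ x y : V, G.Adj x y → s(x, y) ≠ s(u, ub) → G2.Adj x y)
    (hu : G2.Reachable u ub) :
    ∀ {a b : V} (_ : G.Walk a b), G2.Reachable a b := by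
  intro a b q
  induction q with
  | nil => exact SimpleGraph.Reachable.refl _
  | @cons a c b h q ih =>
    refine SimpleGraph.Reachable.trans ?_ ih
    by_cases he : s(a, c) = s(u, ub)
    · rw [Sym2.eq_iff] at he
      rcases he with ⟨rfl, rfl⟩ | ⟨rfl, rfl⟩
      · exact hu
      · exact hu.symm
    · exact (hsub a c h he).reachable

lemma acyclic_mono {K G : SimpleGraph V} (hle : K ≤ G) (hG : G.IsAcyclic) : K.IsAcyclic := by
  intro v c hc
  exact hG (c.mapLe hle) (hc.mapLe hle)

lemma acyclic_sup_edge (K : SimpleGraph V) (hK : K.IsAcyclic) {w wb : V}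
    (h : ¬ K.Reachable w wb) : (K ⊔ SimpleGraph.edge w wb).IsAcyclic := by
  have hne : w ≠ wb := fun he => h (he ▸ SimpleGraph.Reachable.refl _)
  intro a c hc
  by_cases hm : s(w, wb) ∈ c.edges
  · have := (SimpleGraph.adj_and_reachable_delete_edges_iff_exists_cycle.mpr ⟨a, c, hc, hm⟩).2
    apply h
    refine this.mono ?_
    rw [SimpleGraph.edge]
    calc (K ⊔ SimpleGraph.fromEdgeSet {s(w, wb)}) \ SimpleGraph.fromEdgeSet {s(w, wb)}
        = K \ SimpleGraph.fromEdgeSet {s(w, wb)} := sup_sdiff_right_self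
      _ ≤ K := sdiff_le
  · have hsub : ∀ e ∈ c.edges, e ∈ K.edgeSet := by
      intro e he
      have h1 : e ∈ (K ⊔ SimpleGraph.edge w wb).edgeSet := c.edges_subset_edgeSet he
      rw [SimpleGraph.edgeSet_sup] at h1
      rcases h1 with h1 | h1
      · exact h1
      · rw [SimpleGraph.edge_edgeSet_of_ne hne] at h1
        exact absurd (h1 ▸ he) hm
    exact hK (c.transfer K hsub) (hc.transfer hsub)

lemma sum_pair (I : V → V → ℝ) (a b : V) :
    ∑ i : V, ∑ j : V, (if i = a ∧ j = b then I i j else 0) = I a b := by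
  rw [Finset.sum_eq_single a]
  · rw [Finset.sum_eq_single b] <;> simp +contextual
  · intro c _ hc; exact Finset.sum_eq_zero (by simp [hc])
  · simp

lemma score_exchange (I : V → V → ℝ) (G G2 : SimpleGraph V) (u ub w wb : V)
    (huub : u ≠ ub) (hwwb : w ≠ wb)
    (hne : s(u, ub) ≠ s(w, wb))
    (hG : G.Adj u ub) (hG2 : G2.Adj w wb)
    (hnG : ¬ G.Adj w wb) (hnG2 : ¬ G2.Adj u ub)
    (hadj : ∀ i j, s(i, j) ≠ s(u, ub) → s(i, j) ≠ s(w, wb) → (G2.Adj i j ↔ G.Adj i j)) :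
    score I G2 + I u ub + I ub u = score I G + I w wb + I wb w := by
  have key : ∀ i j : V,
      (if G2.Adj i j then I i j else 0) + (if i = u ∧ j = ub then I i j else 0)
        + (if i = ub ∧ j = u then I i j else 0)
      = (if G.Adj i j then I i j else 0) + (if i = w ∧ j = wb then I i j else 0)
        + (if i = wb ∧ j = w then I i j else 0) := by
    intro i j
    by_cases h1 : i = u ∧ j = ub
    · obtain ⟨rfl, rfl⟩ := h1
      have nw1 : ¬(i = w ∧ j = wb) := fun ⟨h, h'⟩ => hne (by rw [h, h'])
      have nw2 : ¬(i = wb ∧ j = w) := fun ⟨h, h'⟩ => hne (by rw [h, h', Sym2.eq_swap])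
      simp [hnG2, hG, huub, huub.symm, nw1, nw2]
    by_cases h2 : i = ub ∧ j = u
    · obtain ⟨rfl, rfl⟩ := h2
      have nw1 : ¬(i = w ∧ j = wb) := fun ⟨h, h'⟩ => hne (by rw [h, h', Sym2.eq_swap])
      have nw2 : ¬(i = wb ∧ j = w) := fun ⟨h, h'⟩ => hne (by rw [h, h'])
      have hn2 : ¬ G2.Adj i j := fun hx => hnG2 hx.symm
      simp [hn2, hG.symm, h1, huub, huub.symm, nw1, nw2]
    by_cases h3 : i = w ∧ j = wb
    · obtain ⟨rfl, rfl⟩ := h3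
      simp [hG2, hnG, h1, h2, hwwb, hwwb.symm]
    by_cases h4 : i = wb ∧ j = w
    · obtain ⟨rfl, rfl⟩ := h4
      have hn : ¬ G.Adj i j := fun hx => hnG hx.symm
      simp [hG2.symm, hn, h1, h2, h3, hwwb, hwwb.symm]
    · have he : s(i, j) ≠ s(u, ub) := by
        rw [Ne, Sym2.eq_iff]; tauto
      have hf : s(i, j) ≠ s(w, wb) := by
        rw [Ne, Sym2.eq_iff]; tauto
      simp [hadj i j he hf, h1, h2, h3, h4]
  have hsum := Finset.sum_congr rfl (fun i (_ : i ∈ Finset.univ) =>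
    Finset.sum_congr rfl (fun j (_ : j ∈ Finset.univ) => key i j))
  simp only [Finset.sum_add_distrib] at hsum
  rw [sum_pair, sum_pair, sum_pair, sum_pair] at hsum
  unfold score
  linarith

/-- **Sufficient condition for exact structure recovery.**
If every pairwise mutual information estimate is within the information threshold
of the true mutual information, then every maximum-weight spanning tree for the
estimated weights (i.e. the output of the Chow–Liu algorithm) is the true tree `T`. -/
theorem exact_recovery_of_estimates_close
    {V : Type*} [Fintype V] [DecidableEq V] {A : Type*} [Countable A]
    (T : SimpleGraph V) (hT : T.IsTree)
    (P : (V → A) → ℝ) (hP : IsProbDist P) (hMarkov : IsMarkovTree T P)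
    (Ihat : V → V → ℝ)
    (hclose : ∀ ℓ ℓb : V, ℓ ≠ ℓb → |Ihat ℓ ℓb - mi P ℓ ℓb| < thresh T (mi P)) :
    ∀ G : SimpleGraph V, IsMaxSpanTree Ihat G → G = T := by
  rintro G ⟨hGtree, hGmax⟩
  by_contra hneq
  have hcardT := hT.card_edgeFinset
  have hcardG := hGtree.card_edgeFinset
  have hnsub : ¬ G.edgeFinset ⊆ T.edgeFinset := by
    intro hsub
    exact hneq (SimpleGraph.edgeFinset_inj.mp
      (Finset.eq_of_subset_of_card_le hsub (by omega)))
  obtain ⟨e, heG, heT⟩ := Finset.not_subset.mp hnsub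
  rw [SimpleGraph.mem_edgeFinset] at heG heT
  induction e using Sym2.ind with
  | _ u ub =>
  rw [SimpleGraph.mem_edgeSet] at heG heT
  have hGuub : G.Adj u ub := heG
  have hTuub : ¬ T.Adj u ub := heT
  set K := G \ SimpleGraph.fromEdgeSet {s(u, ub)} with hKdef
  have hbridge : ¬ K.Reachable u ub :=
    (SimpleGraph.isBridge_iff.mp
      (SimpleGraph.isAcyclic_iff_forall_adj_isBridge.mp hGtree.2 hGuub))
  obtain ⟨p, hp, -⟩ := hT.existsUnique_path u ub
  have hlen : 2 ≤ p.length := by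
    have h0 : p.length ≠ 0 := fun h0 => hGuub.ne (SimpleGraph.Walk.eq_of_length_eq_zero h0)
    have h1 : p.length ≠ 1 := fun h1 => hTuub (SimpleGraph.Walk.adj_of_length_eq_one h1)
    omega
  obtain ⟨w, wb, hTwwb, hmem, hrw, hrwb⟩ :=
    exists_crossing_edge K T u p (SimpleGraph.Reachable.refl u) hbridge
  have hor : ∀ x, K.Reachable u x ∨ K.Reachable ub x := by
    intro x
    obtain ⟨q⟩ := hGtree.1.preconnected u x
    exact reach_or G u ub q (Or.inl (SimpleGraph.Reachable.refl _))
  have hef : s(u, ub) ≠ s(w, wb) := by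
    intro h
    have hmemT : s(w, wb) ∈ T.edgeSet := hTwwb
    rw [← h, SimpleGraph.mem_edgeSet] at hmemT
    exact hTuub hmemT
  have hKnwwb : ¬ K.Reachable w wb := fun hr => hrwb (hrw.trans hr)
  have hubwb : K.Reachable ub wb := (hor wb).resolve_left hrwb
  set G2 := K ⊔ SimpleGraph.edge w wb with hG2def
  have hKle : K ≤ G2 := le_sup_left
  have hG2wwb : G2.Adj w wb :=
    Or.inr ((SimpleGraph.edge_adj w wb w wb).mpr ⟨Or.inl ⟨rfl, rfl⟩, hTwwb.ne⟩)
  have hu2 : G2.Reachable u ub :=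
    ((hrw.mono hKle).trans hG2wwb.reachable).trans ((hubwb.symm).mono hKle)
  have hG2acyc : G2.IsAcyclic := acyclic_sup_edge K (acyclic_mono sdiff_le hGtree.2) hKnwwb
  have hG2conn : G2.Connected := by
    rw [SimpleGraph.connected_iff]
    refine ⟨fun x y => ?_, hGtree.1.nonempty⟩
    obtain ⟨q⟩ := hGtree.1.preconnected x y
    exact lift_reach G2 G u ub (fun a c h he => Or.inl ⟨h, by simp [he]⟩) hu2 q
  have hG2tree : G2.IsTree := ⟨hG2conn, hG2acyc⟩
  have hnG2uub : ¬ G2.Adj u ub := by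
    rintro (h | h)
    · exact h.2 (by simp [hGuub.ne])
    · rw [SimpleGraph.edge_adj] at h
      apply hef
      rcases h.1 with ⟨rfl, rfl⟩ | ⟨rfl, rfl⟩
      · rfl
      · exact Sym2.eq_swap
  have hnGwwb : ¬ G.Adj w wb := by
    intro h
    exact hKnwwb (SimpleGraph.Adj.reachable ⟨h, by simp [Ne.symm hef]⟩)
  have hadj : ∀ i j, s(i, j) ≠ s(u, ub) → s(i, j) ≠ s(w, wb) → (G2.Adj i j ↔ G.Adj i j) := by
    intro i j he hf
    constructor
    · rintro (h | h)
      · exact h.1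
      · rw [SimpleGraph.edge_adj] at h
        exfalso
        apply hf
        rcases h.1 with ⟨rfl, rfl⟩ | ⟨rfl, rfl⟩
        · rfl
        · exact Sym2.eq_swap
    · intro h
      exact Or.inl ⟨h, by simp [he]⟩
  have hscore := score_exchange Ihat G G2 u ub w wb hGuub.ne hTwwb.ne hef
    hGuub hG2wwb hnGwwb hnG2uub hadj
  have hEV : EVtuple T w wb u ub := ⟨hTwwb, p, hp, hmem, hlen⟩
  have ht := thresh_le T (mi P) hEV
  have h1 := abs_lt.mp (hclose w wb hTwwb.ne)
  have h2 := abs_lt.mp (hclose wb w hTwwb.ne.symm)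
  have h3 := abs_lt.mp (hclose u ub hGuub.ne)
  have h4 := abs_lt.mp (hclose ub u hGuub.ne.symm)
  have hmiw : mi P wb w = mi P w wb := mi_symm P wb w
  have hmiu : mi P ub u = mi P u ub := mi_symm P ub u
  have hmax := hGmax G2 hG2tree
  rw [hmiw] at h2
  rw [hmiu] at h4
  linarith [h1.1, h1.2, h2.1, h2.2, h3.1, h3.2, h4.1, h4.2]


end TreePaper
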